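/- Let O be an observation and W a word, with two representations W̄_p and W̄_q of W associated to position constants p and q respectively. Then O·W̄_p is nilpotent if and only if O·W̄_q is nilpotent. Consequently the language of O can be equivalently defined with a universal or an existential quantification over representations. -/

import Mathlib

/-- First-order terms over natural-number symbols: variables and applications. -/
inductive Tm : Type
  | var : ℕ → Tm
  | app : ℕ → List Tm → Tm

namespace Tm

/-- Apply a substitution (map from variables to terms) homomorphically. -/
def subst (σ : ℕ → Tm) : Tm → Tm
  | var x => σ x
  | app f ts => app f (ts.attach.map fun ⟨t, _⟩ => subst σ t)

/-- List of variables occurring in a term. -/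
def varsL : Tm → List ℕ
  | var x => [x]
  | app _ ts => ts.attach.flatMap fun ⟨t, _⟩ => varsL t

/-- Height of a term: maximal distance from the root to a subterm. -/
def height : Tm → ℕ
  | var _ => 0
  | app _ ts => (ts.attach.map fun ⟨t, _⟩ => height t + 1).foldr max 0

/-- Heights of the occurrences of the variable `x` in a term. -/
def occs (x : ℕ) : Tm → List ℕ
  | var y => if y = x then [0] else []
  | app _ ts => ts.attach.flatMap fun ⟨t, _⟩ => (occs x t).map (· + 1)

/-- Symbols occurring in a term, together with the arity they are used with. -/
def symar : Tm → List (ℕ × ℕ)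
  | var _ => []
  | app f ts => (f, ts.length) :: ts.attach.flatMap fun ⟨t, _⟩ => symar t

end Tm

open Tm

/-- Set of variables of a term. -/
def tvars (t : Tm) : Set ℕ := {x | x ∈ t.varsL}

/-- A term is closed when it has no variables. -/
def Closed (t : Tm) : Prop := t.varsL = []

/-- A substitution is finitary when it is the identity on all but finitely many variables. -/
def Finitary (σ : ℕ → Tm) : Prop := {x | σ x ≠ .var x}.Finite

/-- `σ` unifies `t` and `u`. -/
def Unifies (σ : ℕ → Tm) (t u : Tm) : Prop := subst σ t = subst σ u

/-- `θ` is a most general unifier of `t` and `u`: a (finitary) unifier such that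
any other finitary unifier factors as an instance of it. -/
def IsMGU (θ : ℕ → Tm) (t u : Tm) : Prop :=
  Finitary θ ∧ Unifies θ t u ∧
    ∀ σ, Finitary σ → Unifies σ t u → ∃ ρ, Finitary ρ ∧ ∀ x, σ x = subst ρ (θ x)

/-- Renaming of a term along a bijection of variables. -/
def rename (π : ℕ ≃ ℕ) (t : Tm) : Tm := subst (fun x => .var (π x)) t

/-- A flow is (the data of) a pair of terms `head ⊸ body`. -/
abbrev UFlow := Tm × Tm

/-- The flow condition: the variables of the head occur in the body. -/
def IsFlow (f : UFlow) : Prop := tvars f.1 ⊆ tvars f.2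

/-- Equality of flows up to (simultaneous, bijective) renaming of variables. -/
def FlowEquiv (f g : UFlow) : Prop :=
  ∃ π : ℕ ≃ ℕ, rename π f.1 = g.1 ∧ rename π f.2 = g.2

/-- Variables of a flow. -/
def flowVars (f : UFlow) : Set ℕ := tvars f.1 ∪ tvars f.2

/-- `h` is a product of the flows `f = u ⊸ v` and `g = t ⊸ w`: choosing representatives
with disjoint variables, `h = uθ ⊸ wθ` for `θ` a most general unifier of `v` and `t`. -/
def IsProd (f g h : UFlow) : Prop :=
  ∃ f' g' θ, FlowEquiv f f' ∧ FlowEquiv g g' ∧ flowVars f' ∩ flowVars g' = ∅ ∧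
    IsMGU θ f'.2 g'.1 ∧ h = (subst θ f'.1, subst θ g'.2)

/-- A wiring: a set of flows (finite sets of flows are considered up to renaming,
so we model them as sets of representatives). -/
abbrev Wiring := Set UFlow

/-- Product of wirings: pointwise product of flows, where defined. -/
def wmul (F G : Wiring) : Wiring := {h | ∃ f ∈ F, ∃ g ∈ G, IsProd f g h}

/-- The unit wiring `I = x ⊸ x`. -/
def wI : Wiring := {f | FlowEquiv (.var 0, .var 0) f}

/-- Powers of a wiring. -/
def wpow (F : Wiring) : ℕ → Wiring
  | 0 => wI
  | n + 1 => wmul F (wpow F n)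

/-- Equality of wirings up to renaming of each flow. -/
def WEq (F G : Wiring) : Prop :=
  (∀ f ∈ F, ∃ g ∈ G, FlowEquiv f g) ∧ ∀ g ∈ G, ∃ f ∈ F, FlowEquiv f g

/-- A fact: a flow of the form `t ⊸ t` with `t` closed. -/
def IsFact (f : UFlow) : Prop := Closed f.1 ∧ f.2 = f.1

/-- Application of a wiring to (the fact associated with) a closed term:
the set of product flows. -/
def appF (F : Wiring) (t : Tm) : Set UFlow := {h | ∃ f ∈ F, IsProd f (t, t) h}

/-- Application of a wiring to a fact, keeping the facts produced. -/
def factApp (F : Wiring) (t : Tm) : Set Tm := {v | ∃ f ∈ F, IsProd f (t, t) (v, v)}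

/-- A wiring is deterministic if it produces at most one fact from any fact. -/
def Deterministic (F : Wiring) : Prop := ∀ t, Closed t → (appF F t).Subsingleton

/-- Two terms are matchable if renamings of them with disjoint variables are unifiable. -/
def Matchable (t u : Tm) : Prop :=
  ∃ (π π' : ℕ ≃ ℕ), tvars (rename π t) ∩ tvars (rename π' u) = ∅ ∧
    ∃ θ, Finitary θ ∧ Unifies θ (rename π t) (rename π' u)

/-- A flow is balanced if each variable has all its occurrences at the same height. -/
def BalancedF (f : UFlow) : Prop :=
  ∀ x, ∀ n ∈ occs x f.1 ++ occs x f.2, ∀ m ∈ occs x f.1 ++ occs x f.2, n = m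

/-- Height of a flow. -/
def heightF (f : UFlow) : ℕ := max f.1.height f.2.height

/-- A wiring is balanced if all its flows are. -/
def BalancedW (F : Wiring) : Prop := ∀ f ∈ F, BalancedF f

/-- Height of a wiring: maximal height of its flows. -/
noncomputable def heightW (F : Wiring) : ℕ := sSup (heightF '' F)

/-- The computation space of a wiring `F`: closed terms (identified with the
corresponding facts) of height at most `heightW F` built using only symbols
(with their arities) occurring in `F` and the constant `⋆` (symbol `0`). -/
noncomputable def compSpace (F : Wiring) : Set Tm :=
  {t | Closed t ∧ t.height ≤ heightW F ∧
    ∀ q ∈ t.symar, q = (0, 0) ∨ ∃ f ∈ F, q ∈ f.1.symar ++ f.2.symar}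

/-- Nilpotency of a wiring: some power is the empty wiring. -/
def Nilpotent (F : Wiring) : Prop := ∃ n, 0 < n ∧ wpow F n = ∅

/-- Edges of the computation graph of `F`: from `u` to `v` iff `v ∈ F u`. -/
noncomputable def Edge (F : Wiring) (u v : Tm) : Prop :=
  u ∈ compSpace F ∧ v ∈ compSpace F ∧ v ∈ factApp F u

/-- Acyclicity of the computation graph of `F`. -/
noncomputable def AcyclicCG (F : Wiring) : Prop :=
  ¬ ∃ n, 0 < n ∧ ∃ c : ℕ → Tm, (∀ i < n, Edge F (c i) (c (i + 1))) ∧ c n = c 0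

/-- Constant term built on the symbol `s`. -/
def cst (s : ℕ) : Tm := .app s []

/-- The binary function symbol `•` (symbol `1`). -/
def bu (a b : Tm) : Tm := .app 1 [a, b]

/-- The `i`-th letter of the word `⋆ c₁ … cₙ` (`⋆` is the symbol `0`). -/
def letter (w : List ℕ) (i : ℕ) : ℕ := if i = 0 then 0 else w.getD (i - 1) 0

/-- The term `c • d • x • y • M(p)` where `d ∈ {L, R} = {2, 3}`, `x, y` are the
variables `0, 1` and `M` is the unary symbol `4` applied to the position constant `p`. -/
def wt (c d p : ℕ) : Tm :=
  bu (cst c) (bu (cst d) (bu (.var 0) (bu (.var 1) (.app 4 [cst p]))))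

/-- The representation `W̄_p` of the word `w = c₁ … cₙ` associated with the position
constants `p 0, …, p n`: the sum over `i ≤ n` of the flows
`(cᵢ • L • x • y • M(pᵢ)) ⇌ (c_{i+1} • R • x • y • M(p_{i+1}))` (indices mod `n+1`,
`c₀ = c_{n+1} = ⋆`). -/
def wordRep (w : List ℕ) (p : ℕ → ℕ) : Wiring :=
  ⋃ i ∈ Set.Iic w.length,
    {(wt (letter w i) 2 (p i),
      wt (letter w ((i + 1) % (w.length + 1)) ) 3 (p ((i + 1) % (w.length + 1)))),
     (wt (letter w ((i + 1) % (w.length + 1))) 3 (p ((i + 1) % (w.length + 1))),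
      wt (letter w i) 2 (p i))}

/-- An observation over the alphabet `Sig` relative to the set `P` of position
constants: a balanced wiring in `C(Σ∪{⋆}) ⊗ C({L,R}) ⊗ C(S) ⊗ B_{∖P}`, i.e. a sum
of balanced flows not using position constants, whose head and body are of the form
`a • d • s • r` with `a ∈ Σ∪{⋆}`, `d ∈ {L,R}` and `s` a closed (state) term. -/
def IsObservation (Sig : Finset ℕ) (P : Set ℕ) (O : Wiring) : Prop :=
  ∀ f ∈ O, IsFlow f ∧ BalancedF f ∧
    (∀ q ∈ f.1.symar ++ f.2.symar, q.1 ∉ P) ∧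
    ∃ a a' d d' s s' r r', (a ∈ Sig ∨ a = 0) ∧ (a' ∈ Sig ∨ a' = 0) ∧
      (d = 2 ∨ d = 3) ∧ (d' = 2 ∨ d' = 3) ∧ Closed s ∧ Closed s' ∧
      f = (bu (cst a) (bu (cst d) (bu s r)), bu (cst a') (bu (cst d') (bu s' r')))

/-- `p` is a valid choice of (pairwise distinct) position constants for the word `w`. -/
def GoodPos (w : List ℕ) (P : Set ℕ) (p : ℕ → ℕ) : Prop :=
  (∀ i ≤ w.length, p i ∈ P) ∧ Set.InjOn p (Set.Iic w.length)


/-! ### Auxiliary development: renaming of (non-variable) symbols -/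

namespace Tm

/-- Renaming of function symbols along `π`. -/
def smap (π : ℕ → ℕ) : Tm → Tm
  | var x => var x
  | app f ts => app (π f) (ts.attach.map fun ⟨t, _⟩ => smap π t)

/-- Custom induction principle for `Tm`. -/
theorem ind' {motive : Tm → Prop} (hv : ∀ x, motive (var x))
    (ha : ∀ f ts, (∀ t ∈ ts, motive t) → motive (app f ts)) : ∀ t, motive t
  | var x => hv x
  | app f ts => ha f ts (fun t _ => ind' hv ha t)

theorem subst_app (σ : ℕ → Tm) (f : ℕ) (ts : List Tm) :
    subst σ (app f ts) = app f (ts.map (subst σ)) := by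
  rw [subst]; congr 1; exact List.attach_map_val (l := ts) (f := subst σ) ▸ rfl

theorem smap_app (π : ℕ → ℕ) (f : ℕ) (ts : List Tm) :
    smap π (app f ts) = app (π f) (ts.map (smap π)) := by
  rw [smap]; congr 1; exact List.attach_map_val (l := ts) (f := smap π) ▸ rfl

theorem varsL_app (f : ℕ) (ts : List Tm) :
    varsL (app f ts) = ts.flatMap varsL := by
  rw [varsL]; simp [List.flatMap]

theorem symar_app (f : ℕ) (ts : List Tm) :
    symar (app f ts) = (f, ts.length) :: ts.flatMap symar := by
  rw [symar]; simp [List.flatMap]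

@[simp] theorem smap_var (π : ℕ → ℕ) (x : ℕ) : smap π (var x) = var x := by rw [smap]

theorem smap_smap (π π' : ℕ → ℕ) (t : Tm) : smap π (smap π' t) = smap (π ∘ π') t := by
  induction t using ind' with
  | hv x => simp
  | ha f ts ih => simp only [smap_app, List.map_map, Function.comp]
                  exact congrArg _ (List.map_congr_left fun t ht => ih t ht)

theorem smap_id (t : Tm) : smap id t = t := by
  induction t using ind' with
  | hv x => simp
  | ha f ts ih =>
      simp only [smap_app, id]
      exact congrArg _ (List.map_congr_left ih |>.trans (List.map_id ts))

theorem smap_symm_smap (π : ℕ ≃ ℕ) (t : Tm) : smap π.symm (smap π t) = t := by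
  rw [smap_smap, Equiv.symm_comp_self, smap_id]

theorem smap_smap_symm (π : ℕ ≃ ℕ) (t : Tm) : smap π (smap π.symm t) = t := by
  rw [smap_smap, Equiv.self_comp_symm, smap_id]

theorem varsL_smap (π : ℕ → ℕ) (t : Tm) : varsL (smap π t) = varsL t := by
  induction t using ind' with
  | hv x => simp [varsL]
  | ha f ts ih =>
      rw [smap_app, varsL_app, varsL_app, List.flatMap_map]
      exact List.flatMap_congr fun t ht => ih t ht

theorem smap_eq_self (π : ℕ → ℕ) (t : Tm) (h : ∀ s ∈ t.symar, π s.1 = s.1) :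
    smap π t = t := by
  induction t using ind' with
  | hv x => simp
  | ha f ts ih =>
      rw [smap_app, symar_app] at *
      rw [h (f, ts.length) List.mem_cons_self]
      refine congrArg _ ?_
      refine (List.map_congr_left fun t ht => ih t ht fun s hs => ?_).trans (List.map_id ts)
      exact h s (List.mem_cons_of_mem _ (List.mem_flatMap.mpr ⟨t, ht, hs⟩))

theorem subst_smap (π : ℕ → ℕ) (σ : ℕ → Tm) (t : Tm) :
    subst (fun x => smap π (σ x)) (smap π t) = smap π (subst σ t) := by
  induction t using ind' with
  | hv x => rw [smap_var]; rw [subst, subst]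
  | ha f ts ih =>
      rw [smap_app, subst_app, subst_app, smap_app, List.map_map, List.map_map]
      exact congrArg _ (List.map_congr_left fun t ht => ih t ht)

end Tm

open Tm

theorem rename_smap (τ : ℕ ≃ ℕ) (π : ℕ → ℕ) (t : Tm) :
    rename τ (smap π t) = smap π (rename τ t) := by
  have := subst_smap π (fun x => Tm.var (τ x)) t
  simpa [rename] using this

theorem tvars_smap (π : ℕ → ℕ) (t : Tm) : tvars (smap π t) = tvars t := by
  simp [tvars, varsL_smap]

theorem closed_smap (π : ℕ → ℕ) (t : Tm) : Closed (smap π t) ↔ Closed t := by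
  simp [Closed, varsL_smap]

/-- Renaming of symbols in a flow. -/
def smapF (π : ℕ → ℕ) (f : UFlow) : UFlow := (smap π f.1, smap π f.2)

/-- Renaming of symbols in a wiring. -/
def smapW (π : ℕ → ℕ) (F : Wiring) : Wiring := smapF π '' F

theorem smapF_symm_smapF (π : ℕ ≃ ℕ) (f : UFlow) : smapF π.symm (smapF π f) = f := by
  cases f; simp [smapF, smap_symm_smap]

theorem smapF_smapF_symm (π : ℕ ≃ ℕ) (f : UFlow) : smapF π (smapF π.symm f) = f := by
  cases f; simp [smapF, smap_smap_symm]

theorem flowEquiv_smap (π : ℕ → ℕ) {f g : UFlow} (h : FlowEquiv f g) :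
    FlowEquiv (smapF π f) (smapF π g) := by
  obtain ⟨τ, h1, h2⟩ := h
  refine ⟨τ, ?_, ?_⟩ <;> simp only [smapF] <;> rw [rename_smap]
  · rw [h1]
  · rw [h2]

theorem finitary_smap (π : ℕ → ℕ) {σ : ℕ → Tm} (h : Finitary σ) :
    Finitary (fun x => smap π (σ x)) := by
  refine h.subset fun x hx => ?_
  simp only [Set.mem_setOf_eq] at *
  intro he; exact hx (by rw [he, smap_var])

theorem unifies_smap (π : ℕ → ℕ) {σ : ℕ → Tm} {t u : Tm} (h : Unifies σ t u) :
    Unifies (fun x => smap π (σ x)) (smap π t) (smap π u) := by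
  unfold Unifies at *
  rw [subst_smap, subst_smap, h]

theorem mgu_smap (π : ℕ ≃ ℕ) {θ : ℕ → Tm} {t u : Tm} (h : IsMGU θ t u) :
    IsMGU (fun x => smap π (θ x)) (smap π t) (smap π u) := by
  obtain ⟨hf, hu, hm⟩ := h
  refine ⟨finitary_smap π hf, unifies_smap π hu, fun σ hσf hσu => ?_⟩
  have hσu' : Unifies (fun x => smap π.symm (σ x)) t u := by
    have := unifies_smap π.symm hσu
    rwa [smap_symm_smap, smap_symm_smap] at this
  obtain ⟨ρ, hρf, hρ⟩ := hm _ (finitary_smap π.symm hσf) hσu'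
  refine ⟨fun x => smap π (ρ x), finitary_smap π hρf, fun x => ?_⟩
  have := congrArg (smap π) (hρ x)
  rw [smap_smap_symm] at this
  rw [this, subst_smap]

theorem flowVars_smap (π : ℕ → ℕ) (f : UFlow) : flowVars (smapF π f) = flowVars f := by
  simp [flowVars, smapF, tvars_smap]

theorem isProd_smap (π : ℕ ≃ ℕ) {f g h : UFlow} (hp : IsProd f g h) :
    IsProd (smapF π f) (smapF π g) (smapF π h) := by
  obtain ⟨f', g', θ, hf, hg, hdisj, hmgu, heq⟩ := hp
  refine ⟨smapF π f', smapF π g', fun x => smap π (θ x),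
    flowEquiv_smap π hf, flowEquiv_smap π hg, ?_, mgu_smap π hmgu, ?_⟩
  · rw [flowVars_smap, flowVars_smap]; exact hdisj
  · rw [heq]; simp [smapF, subst_smap]

theorem wmul_smap (π : ℕ ≃ ℕ) (F G : Wiring) :
    smapW π (wmul F G) = wmul (smapW π F) (smapW π G) := by
  ext h
  constructor
  · rintro ⟨h', ⟨f, hf, g, hg, hp⟩, rfl⟩
    exact ⟨smapF π f, ⟨f, hf, rfl⟩, smapF π g, ⟨g, hg, rfl⟩, isProd_smap π hp⟩
  · rintro ⟨_, ⟨f, hf, rfl⟩, _, ⟨g, hg, rfl⟩, hp⟩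
    refine ⟨smapF π.symm h, ⟨f, hf, g, hg, ?_⟩, smapF_smapF_symm π h⟩
    have := isProd_smap π.symm hp
    rwa [smapF_symm_smapF, smapF_symm_smapF] at this

theorem wI_smap (π : ℕ ≃ ℕ) : smapW π wI = wI := by
  have key : ∀ f ∈ wI, smapF π f = f := by
    rintro ⟨a, b⟩ ⟨τ, h1, h2⟩
    have e1 : rename τ (Tm.var 0) = Tm.var (τ 0) := by simp [rename, subst]
    simp only at h1 h2
    rw [e1] at h1 h2
    subst h1; subst h2
    simp [smapF]
  ext f
  constructor
  · rintro ⟨g, hg, rfl⟩; rw [key g hg]; exact hg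
  · intro hf; exact ⟨f, hf, key f hf⟩

theorem wpow_smap (π : ℕ ≃ ℕ) (F : Wiring) (n : ℕ) :
    wpow (smapW π F) n = smapW π (wpow F n) := by
  induction n with
  | zero => rw [wpow, wpow, wI_smap]
  | succ n ih => rw [wpow, wpow, ih, wmul_smap]

theorem nilpotent_smap (π : ℕ ≃ ℕ) (F : Wiring) :
    Nilpotent (smapW π F) ↔ Nilpotent F := by
  unfold Nilpotent
  constructor <;> rintro ⟨n, hn, he⟩ <;> refine ⟨n, hn, ?_⟩
  · rw [wpow_smap] at he; exact Set.image_eq_empty.mp he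
  · rw [wpow_smap, he]; exact Set.image_empty _

theorem smap_wt (π : ℕ → ℕ) (h1 : π 1 = 1) (h4 : π 4 = 4) (c d r : ℕ) :
    smap π (wt c d r) = wt (π c) (π d) (π r) := by
  simp [wt, bu, cst, smap_app, h1, h4]

theorem obs_smap (π : ℕ → ℕ) (P : Set ℕ) (O : Wiring)
    (hπ : ∀ x, x ∉ P → π x = x)
    (hOs : ∀ f ∈ O, ∀ s ∈ f.1.symar ++ f.2.symar, s.1 ∉ P) :
    smapW π O = O := by
  have key : ∀ f ∈ O, smapF π f = f := by
    intro f hf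
    have h := hOs _ hf
    cases f with | mk a b =>
    simp only [smapF]
    rw [smap_eq_self π a (fun s hs => hπ _ (h s (List.mem_append_left _ hs))),
        smap_eq_self π b (fun s hs => hπ _ (h s (List.mem_append_right _ hs)))]
  ext f
  constructor
  · rintro ⟨g, hg, rfl⟩; rw [key g hg]; exact hg
  · intro hf; exact ⟨f, hf, key f hf⟩

theorem wordRep_smap (π : ℕ ≃ ℕ) (w : List ℕ) (p q : ℕ → ℕ)
    (h1 : π 1 = 1) (h2 : π 2 = 2) (h3 : π 3 = 3) (h4 : π 4 = 4)
    (hl : ∀ i ≤ w.length, π (letter w i) = letter w i)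
    (hpq : ∀ i ≤ w.length, π (p i) = q i) :
    smapW π (wordRep w p) = wordRep w q := by
  unfold wordRep smapW
  rw [Set.image_iUnion₂]
  refine Set.iUnion₂_congr fun i hi => ?_
  rw [Set.image_insert_eq, Set.image_singleton]
  have hi' : i ≤ w.length := hi
  have hmod : (i + 1) % (w.length + 1) ≤ w.length :=
    Nat.lt_succ_iff.mp (Nat.mod_lt _ (Nat.succ_pos _))
  simp only [smapF, smap_wt π h1 h4, h2, h3, hl i hi', hl _ hmod, hpq i hi', hpq _ hmod]
/-- for an observation `O` and a word `w`, `O·W̄_p` is nilpotent iff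
`O·W̄_q` is nilpotent, for any two representations of `w`; consequently the language
of `O` can equivalently be defined by a universal or an existential quantification
over representations. -/
theorem representation_independence (Sig : Finset ℕ) (P : Set ℕ) (O : Wiring)
    (w : List ℕ) (hPinf : P.Infinite)
    (hP : ∀ s ∈ P, s ∉ Sig ∧ s ≠ 0 ∧ s ≠ 1 ∧ s ≠ 2 ∧ s ≠ 3 ∧ s ≠ 4)
    (hw : ∀ c ∈ w, c ∈ Sig) (hO : IsObservation Sig P O) :
    (∀ p q : ℕ → ℕ, GoodPos w P p → GoodPos w P q →
      (Nilpotent (wmul O (wordRep w p)) ↔ Nilpotent (wmul O (wordRep w q)))) ∧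
    ((∀ p, GoodPos w P p → Nilpotent (wmul O (wordRep w p))) ↔
      (∃ p, GoodPos w P p ∧ Nilpotent (wmul O (wordRep w p)))) := by
  classical
  have hlet : ∀ i, letter w i ∉ P := by
    intro i
    unfold letter
    split
    · exact fun h => (hP _ h).2.1 rfl
    · rcases Nat.lt_or_ge (i - 1) w.length with h | h
      · rw [List.getD_eq_getElem _ _ h]
        exact fun hmem => (hP _ hmem).1 (hw _ (List.getElem_mem _))
      · rw [List.getD_eq_default _ _ h]
        exact fun h => (hP _ h).2.1 rfl
  have key : ∀ p q : ℕ → ℕ, GoodPos w P p → GoodPos w P q →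
      (Nilpotent (wmul O (wordRep w p)) ↔ Nilpotent (wmul O (wordRep w q))) := by
    intro p q hp hq
    obtain ⟨hpP, hpinj⟩ := hp
    obtain ⟨hqP, hqinj⟩ := hq
    set n := w.length with hn
    set A : Set ℕ := p '' Set.Iic n with hAdef
    set B : Set ℕ := q '' Set.Iic n with hBdef
    have hA : A ⊆ P := by rintro _ ⟨i, hi, rfl⟩; exact hpP i hi
    have hB : B ⊆ P := by rintro _ ⟨i, hi, rfl⟩; exact hqP i hi
    have finA : A.Finite := (Set.finite_Iic n).image p
    have finB : B.Finite := (Set.finite_Iic n).image q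
    have hden : ∀ s : Set ℕ, s.Infinite → Nonempty (s ≃ ℕ) := by
      intro s h
      have h1 := h.to_subtype
      have h2 : Countable s := (Set.to_countable s).to_subtype
      exact ⟨(nonempty_denumerable_iff.mpr ⟨h2, h1⟩).some.eqv⟩
    obtain ⟨gA⟩ := hden _ (hPinf.diff finA)
    obtain ⟨gB⟩ := hden _ (hPinf.diff finB)
    let e : ↥A ≃ ↥B :=
      (Equiv.Set.imageOfInjOn p (Set.Iic n) hpinj).symm.trans
        (Equiv.Set.imageOfInjOn q (Set.Iic n) hqinj)
    let σP : ↥P ≃ ↥P :=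
      (Equiv.Set.sumDiffSubset hA).symm.trans
        ((e.sumCongr (gA.trans gB.symm)).trans (Equiv.Set.sumDiffSubset hB))
    let π : Equiv.Perm ℕ := Equiv.Perm.extendDomain σP (Equiv.refl ↥P)
    have hfix : ∀ x, x ∉ P → π x = x := fun x hx =>
      Equiv.Perm.extendDomain_apply_not_subtype σP (Equiv.refl ↥P) hx
    have hpq : ∀ i ≤ n, π (p i) = q i := by
      intro i hi
      have hpi : p i ∈ P := hpP i hi
      have memA : p i ∈ A := ⟨i, hi, rfl⟩
      have memB : q i ∈ B := ⟨i, hi, rfl⟩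
      have step1 : (Equiv.Set.sumDiffSubset hA).symm ⟨p i, hpi⟩ = Sum.inl ⟨p i, memA⟩ := by
        rw [Equiv.symm_apply_eq, Equiv.Set.sumDiffSubset_apply_inl]
      have step2 : e ⟨p i, memA⟩ = ⟨q i, memB⟩ := by
        show (Equiv.Set.imageOfInjOn q (Set.Iic n) hqinj)
          ((Equiv.Set.imageOfInjOn p (Set.Iic n) hpinj).symm ⟨p i, memA⟩) = _
        have : (Equiv.Set.imageOfInjOn p (Set.Iic n) hpinj).symm ⟨p i, memA⟩
            = ⟨i, hi⟩ := by rw [Equiv.symm_apply_eq]; rfl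
        rw [this]; rfl
      have step3 : σP ⟨p i, hpi⟩ = ⟨q i, hB memB⟩ := by
        show (Equiv.Set.sumDiffSubset hB)
          ((e.sumCongr (gA.trans gB.symm)) ((Equiv.Set.sumDiffSubset hA).symm ⟨p i, hpi⟩)) = _
        rw [step1, Equiv.sumCongr_apply, Sum.map_inl, step2,
          Equiv.Set.sumDiffSubset_apply_inl]
      rw [Equiv.Perm.extendDomain_apply_subtype σP (Equiv.refl ↥P) hpi]
      simp only [Equiv.refl_symm, Equiv.refl_apply, step3]
    have hnotP : ∀ m : ℕ, (m = 1 ∨ m = 2 ∨ m = 3 ∨ m = 4) → m ∉ P := by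
      rintro m (rfl | rfl | rfl | rfl) h
      · exact (hP _ h).2.2.1 rfl
      · exact (hP _ h).2.2.2.1 rfl
      · exact (hP _ h).2.2.2.2.1 rfl
      · exact (hP _ h).2.2.2.2.2 rfl
    have hOfix : smapW π O = O :=
      obs_smap π P O hfix (fun f hf => (hO f hf).2.2.1)
    have hrep : smapW π (wordRep w p) = wordRep w q :=
      wordRep_smap π w p q
        (hfix 1 (hnotP 1 (Or.inl rfl))) (hfix 2 (hnotP 2 (Or.inr (Or.inl rfl))))
        (hfix 3 (hnotP 3 (Or.inr (Or.inr (Or.inl rfl)))))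
        (hfix 4 (hnotP 4 (Or.inr (Or.inr (Or.inr rfl)))))
        (fun i _ => hfix _ (hlet i)) hpq
    have hmulrep : smapW π (wmul O (wordRep w p)) = wmul O (wordRep w q) := by
      rw [wmul_smap, hOfix, hrep]
    rw [← hmulrep]
    exact (nilpotent_smap π _).symm
  refine ⟨key, ?_, ?_⟩
  · intro hall
    have emb := hPinf.natEmbedding
    refine ⟨fun i => (emb i : ℕ), ⟨fun i _ => (emb i).2, fun i _ j _ h => ?_⟩, ?_⟩
    · exact emb.injective (Subtype.ext h)
    · exact hall _ ⟨fun i _ => (emb i).2, fun i _ j _ h => emb.injective (Subtype.ext h)⟩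
  · rintro ⟨p, hp, hnil⟩ q hq
    exact (key q p hq hp).mpr hnil
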